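/- Let M > 0, Λ < 0, ℓ ≥ 2 an integer, let r_h be the unique positive root of f, and let r*(r) = −∫_r^∞ ds/f(s) for r > r_h (the integral converges). Then ∫_{r_h}^∞ \big( r·e^{w·r*(r)}/(μr + 6M) \big)² · (1/f(r)) dr < ∞; that is, the mode χ⁺(r) = r·e^{w·r*(r)}/(μr + 6M), expressed in the tortoise coordinate, is square integrable on (−∞, 0) with respect to dr*. -/

import Mathlib

open MeasureTheory Set

lemma sads_factor {M Λ rh : ℝ} (hrh : 0 < rh)
    (hroot : 1 - 2 * M / rh - Λ * rh ^ 2 / 3 = 0) {s : ℝ} (hs : 0 < s) :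
    1 - 2 * M / s - Λ * s ^ 2 / 3
      = (s - rh) * (2 * M / (s * rh) - Λ * (s + rh) / 3) := by
  have h0 : rh ≠ 0 := ne_of_gt hrh
  have h1 : s ≠ 0 := ne_of_gt hs
  have h2 : rh - 2 * M - Λ * rh ^ 3 / 3 = 0 := by
    field_simp at hroot; linarith
  field_simp
  nlinarith [h2]

section

variable {M Λ rh : ℝ} (hM : 0 < M) (hΛ : Λ < 0) (hrh : 0 < rh)
    (hroot : 1 - 2 * M / rh - Λ * rh ^ 2 / 3 = 0)

include hM hΛ hrh hroot

-- lower bound near horizon (valid for all s > rh)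
lemma sads_lower {s : ℝ} (hs : rh < s) :
    -Λ * (2 * rh) / 3 * (s - rh) ≤ 1 - 2 * M / s - Λ * s ^ 2 / 3 := by
  have hs0 : 0 < s := lt_trans hrh hs
  rw [sads_factor hrh hroot hs0]
  have hq : -Λ * (2 * rh) / 3 ≤ 2 * M / (s * rh) - Λ * (s + rh) / 3 := by
    have : 0 ≤ 2 * M / (s * rh) := by positivity
    nlinarith
  nlinarith [sub_pos.mpr hs]

lemma sads_pos {s : ℝ} (hs : rh < s) : 0 < 1 - 2 * M / s - Λ * s ^ 2 / 3 := by
  have h := sads_lower hM hΛ hrh hroot hs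
  have h2 : 0 < -Λ * (2 * rh) / 3 * (s - rh) :=
    mul_pos (by nlinarith) (sub_pos.mpr hs)
  linarith

-- upper bound near horizon
lemma sads_upper {s : ℝ} (hs : rh < s) (hs2 : s ≤ 2 * rh) :
    1 - 2 * M / s - Λ * s ^ 2 / 3 ≤ (2 * M / rh ^ 2 - Λ * rh) * (s - rh) := by
  have hs0 : 0 < s := lt_trans hrh hs
  rw [sads_factor hrh hroot hs0]
  have hq : 2 * M / (s * rh) - Λ * (s + rh) / 3 ≤ 2 * M / rh ^ 2 - Λ * rh := by
    have h1 : 2 * M / (s * rh) ≤ 2 * M / rh ^ 2 := by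
      apply div_le_div_of_nonneg_left (by linarith) (by positivity)
      nlinarith
    nlinarith
  nlinarith [sub_pos.mpr hs]

-- lower bound at infinity
lemma sads_far {s : ℝ} (hs : 2 * rh ≤ s) :
    -Λ / 4 * s ^ 2 ≤ 1 - 2 * M / s - Λ * s ^ 2 / 3 := by
  have hs0 : 0 < s := by linarith
  rw [sads_factor hrh hroot hs0]
  have hq : -Λ * (s + rh) / 3 ≤ 2 * M / (s * rh) - Λ * (s + rh) / 3 := by
    have : 0 ≤ 2 * M / (s * rh) := by positivity
    linarith
  have h4 : 4 * rh ^ 2 ≤ s ^ 2 := by nlinarith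
  have h5 : 0 ≤ -Λ * (s ^ 2 - 4 * rh ^ 2) := mul_nonneg (by linarith) (by linarith)
  calc -Λ / 4 * s ^ 2 ≤ (s - rh) * (-Λ * (s + rh) / 3) := by nlinarith
    _ ≤ (s - rh) * (2 * M / (s * rh) - Λ * (s + rh) / 3) := by
        apply mul_le_mul_of_nonneg_left hq; linarith

end

section

variable {M Λ rh : ℝ} (hM : 0 < M) (hΛ : Λ < 0) (hrh : 0 < rh)
    (hroot : 1 - 2 * M / rh - Λ * rh ^ 2 / 3 = 0)

include hM hΛ hrh hroot

lemma sads_contOn :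
    ContinuousOn (fun s : ℝ => (1 - 2 * M / s - Λ * s ^ 2 / 3)⁻¹) (Ioi rh) := by
  apply ContinuousOn.inv₀
  · apply ContinuousOn.sub
    · apply ContinuousOn.sub continuousOn_const
      exact continuousOn_const.div continuousOn_id
        (fun s hs => ne_of_gt (lt_trans hrh hs))
    · fun_prop
  · exact fun s hs => ne_of_gt (sads_pos hM hΛ hrh hroot hs)

lemma sads_int (r : ℝ) (hr : rh < r) :
    IntegrableOn (fun s : ℝ => (1 - 2 * M / s - Λ * s ^ 2 / 3)⁻¹) (Set.Ioi r) := by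
  have hr0 : 0 < r := lt_trans hrh hr
  set c := max r (2 * rh) with hc
  have hrc : r ≤ c := le_max_left _ _
  have hc0 : 0 < c := lt_of_lt_of_le hr0 hrc
  rw [← Ioc_union_Ioi_eq_Ioi hrc]
  apply IntegrableOn.union
  · have hcont : ContinuousOn (fun s : ℝ => (1 - 2 * M / s - Λ * s ^ 2 / 3)⁻¹) (Icc r c) :=
      (sads_contOn hM hΛ hrh hroot).mono (fun s hs => lt_of_lt_of_le hr hs.1)
    exact hcont.integrableOn_Icc.mono_set Ioc_subset_Icc_self
  · apply Integrable.mono'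
      ((integrableOn_Ioi_rpow_of_lt (by norm_num : (-2:ℝ) < -1) hc0).const_mul (4 / (-Λ)))
    · exact ((sads_contOn hM hΛ hrh hroot).mono
        (fun s hs => lt_trans hr (lt_of_le_of_lt hrc hs))).aestronglyMeasurable measurableSet_Ioi
    · rw [ae_restrict_iff' measurableSet_Ioi]
      apply ae_of_all
      intro s hs
      have hs2 : 2 * rh ≤ s := le_of_lt (lt_of_le_of_lt (le_max_right r (2*rh)) hs)
      have hs0 : 0 < s := by linarith
      have hsrh : rh < s := by linarith
      have hfar := sads_far hM hΛ hrh hroot hs2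
      have hfpos := sads_pos hM hΛ hrh hroot hsrh
      have hq : 0 < -Λ / 4 * s ^ 2 := by
        apply mul_pos (by linarith) (by positivity)
      rw [Real.norm_eq_abs, abs_of_nonneg (le_of_lt (inv_pos.mpr hfpos))]
      have h1 : (1 - 2 * M / s - Λ * s ^ 2 / 3)⁻¹ ≤ (-Λ / 4 * s ^ 2)⁻¹ := by
        exact inv_anti₀ hq hfar
      have h2 : s ^ (-2:ℝ) = (s ^ 2)⁻¹ := by
        rw [show (-2:ℝ) = -((2:ℕ):ℝ) by norm_num, Real.rpow_neg hs0.le, Real.rpow_natCast]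
      rw [h2]
      calc (1 - 2 * M / s - Λ * s ^ 2 / 3)⁻¹ ≤ (-Λ / 4 * s ^ 2)⁻¹ := h1
        _ = 4 / (-Λ) * (s ^ 2)⁻¹ := by
            field_simp

end

section

variable {M Λ rh : ℝ} (hM : 0 < M) (hΛ : Λ < 0) (hrh : 0 < rh)
    (hroot : 1 - 2 * M / rh - Λ * rh ^ 2 / 3 = 0)

include hM hΛ hrh hroot

lemma sads_rstar_bound (r : ℝ) (hr : rh < r) (hr2 : r ≤ 2 * rh) :
    (2 * M / rh ^ 2 - Λ * rh)⁻¹ * Real.log (rh / (r - rh))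
      ≤ ∫ s in Set.Ioi r, (1 - 2 * M / s - Λ * s ^ 2 / 3)⁻¹ := by
  set K : ℝ := 2 * M / rh ^ 2 - Λ * rh with hKdef
  have hKpos : 0 < K := by
    rw [hKdef]
    have h1 : 0 < 2 * M / rh ^ 2 := by positivity
    have h2 : 0 < -Λ * rh := mul_pos (by linarith) hrh
    linarith
  have hrr : 0 < r - rh := sub_pos.mpr hr
  -- integrability of the comparison function on Ioc r (2 rh)
  have hgcont : ContinuousOn (fun s : ℝ => (K * (s - rh))⁻¹) (Icc r (2 * rh)) := by
    apply ContinuousOn.inv₀ (by fun_prop)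
    intro s hs
    have : 0 < s - rh := by have := hs.1; linarith
    positivity
  have hgint : IntegrableOn (fun s : ℝ => (K * (s - rh))⁻¹) (Ioc r (2 * rh)) :=
    hgcont.integrableOn_Icc.mono_set Ioc_subset_Icc_self
  have hfint : IntegrableOn (fun s : ℝ => (1 - 2 * M / s - Λ * s ^ 2 / 3)⁻¹)
      (Ioc r (2 * rh)) := (sads_int hM hΛ hrh hroot r hr).mono_set Ioc_subset_Ioi_self
  have stepA : (∫ s in Ioc r (2 * rh), (K * (s - rh))⁻¹)
      ≤ ∫ s in Ioc r (2 * rh), (1 - 2 * M / s - Λ * s ^ 2 / 3)⁻¹ := by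
    apply setIntegral_mono_on hgint hfint measurableSet_Ioc
    intro s hs
    have hs1 : rh < s := lt_trans hr hs.1
    exact inv_anti₀ (sads_pos hM hΛ hrh hroot hs1)
      (sads_upper hM hΛ hrh hroot hs1 hs.2)
  have stepB : (∫ s in Ioc r (2 * rh), (1 - 2 * M / s - Λ * s ^ 2 / 3)⁻¹)
      ≤ ∫ s in Set.Ioi r, (1 - 2 * M / s - Λ * s ^ 2 / 3)⁻¹ := by
    apply setIntegral_mono_set (sads_int hM hΛ hrh hroot r hr)
    · rw [Filter.EventuallyLE, ae_restrict_iff' measurableSet_Ioi]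
      apply ae_of_all
      intro s hs
      exact le_of_lt (inv_pos.mpr (sads_pos hM hΛ hrh hroot (lt_trans hr hs)))
    · exact HasSubset.Subset.eventuallyLE Ioc_subset_Ioi_self
  have stepC : (∫ s in Ioc r (2 * rh), (K * (s - rh))⁻¹)
      = K⁻¹ * Real.log (rh / (r - rh)) := by
    rw [← intervalIntegral.integral_of_le (by linarith : r ≤ 2 * rh)]
    have : ∀ s : ℝ, (K * (s - rh))⁻¹ = K⁻¹ * (s - rh)⁻¹ := fun s => by
      rw [mul_inv]
    simp_rw [this]
    rw [intervalIntegral.integral_const_mul]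
    have hcomp : (∫ x in r..(2 * rh), (x - rh)⁻¹)
        = ∫ x in (r - rh)..(2 * rh - rh), x⁻¹ :=
      intervalIntegral.integral_comp_sub_right (fun x => x⁻¹) rh
    rw [hcomp, show 2 * rh - rh = rh by ring,
      integral_inv (notMem_uIcc_of_lt hrr hrh)]
  linarith

lemma sads_rstar_cont :
    ContinuousOn (fun r : ℝ => ∫ s in Set.Ioi r, (1 - 2 * M / s - Λ * s ^ 2 / 3)⁻¹)
      (Set.Ioi rh) := by
  intro r0 hr0
  apply ContinuousAt.continuousWithinAt
  simp only [mem_Ioi] at hr0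
  set a : ℝ := (rh + r0) / 2 with ha
  have ha1 : rh < a := by simp only [ha]; linarith
  have ha2 : a < r0 := by simp only [ha]; linarith
  have key : ∀ r ∈ Set.Ioi a,
      (∫ s in Set.Ioi r, (1 - 2 * M / s - Λ * s ^ 2 / 3)⁻¹)
        = (∫ s in Set.Ioi a, (1 - 2 * M / s - Λ * s ^ 2 / 3)⁻¹)
          - ∫ x in a..r, (1 - 2 * M / x - Λ * x ^ 2 / 3)⁻¹ := by
    intro r hr
    simp only [mem_Ioi] at hr
    have hsplit : Ioc a r ∪ Set.Ioi r = Set.Ioi a := Ioc_union_Ioi_eq_Ioi hr.le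
    have hdisj : Disjoint (Ioc a r) (Set.Ioi r) := Ioc_disjoint_Ioi le_rfl
    have hint1 : IntegrableOn (fun s : ℝ => (1 - 2 * M / s - Λ * s ^ 2 / 3)⁻¹)
        (Ioc a r) := (sads_int hM hΛ hrh hroot a ha1).mono_set Ioc_subset_Ioi_self
    have hint2 := sads_int hM hΛ hrh hroot r (lt_trans ha1 hr)
    have := setIntegral_union hdisj measurableSet_Ioi hint1 hint2
      (f := fun s : ℝ => (1 - 2 * M / s - Λ * s ^ 2 / 3)⁻¹) (μ := volume)
    rw [hsplit] at this
    rw [intervalIntegral.integral_of_le hr.le]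
    linarith
  have hmeas : StronglyMeasurableAtFilter
      (fun s : ℝ => (1 - 2 * M / s - Λ * s ^ 2 / 3)⁻¹) (nhds r0) volume :=
    (sads_contOn hM hΛ hrh hroot).stronglyMeasurableAtFilter isOpen_Ioi r0 hr0
  have hcontAt : ContinuousAt (fun s : ℝ => (1 - 2 * M / s - Λ * s ^ 2 / 3)⁻¹) r0 :=
    (sads_contOn hM hΛ hrh hroot).continuousAt (Ioi_mem_nhds hr0)
  have hii : IntervalIntegrable (fun s : ℝ => (1 - 2 * M / s - Λ * s ^ 2 / 3)⁻¹)
      volume a r0 := by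
    rw [intervalIntegrable_iff_integrableOn_Ioc_of_le ha2.le]
    exact (sads_int hM hΛ hrh hroot a ha1).mono_set Ioc_subset_Ioi_self
  have hderiv := intervalIntegral.integral_hasDerivAt_right hii hmeas hcontAt
  have hCA : ContinuousAt (fun r : ℝ =>
      (∫ s in Set.Ioi a, (1 - 2 * M / s - Λ * s ^ 2 / 3)⁻¹)
        - ∫ x in a..r, (1 - 2 * M / x - Λ * x ^ 2 / 3)⁻¹) r0 :=
    continuousAt_const.sub hderiv.continuousAt
  apply hCA.congr
  filter_upwards [Ioi_mem_nhds ha2] with r hr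
  exact (key r hr).symm

end

/-- For Schwarzschild-anti de Sitter (`M > 0`, `Λ < 0`) the Chandrasekhar mode
`χ⁺(r) = r e^{w r*(r)}/(μr + 6M)` is square integrable with respect to the
tortoise measure `dr* = dr/f` on the static region `r > r_h`; i.e.
`∫_{r_h}^∞ (χ⁺)²/f dr < ∞`. The improper integral defining
`r*(r) = -∫_r^∞ ds/f(s)` converges for `r > r_h`. -/
theorem stmt_14 (M Λ : ℝ) (hM : 0 < M) (hΛ : Λ < 0) (ℓ : ℕ) (hℓ : 2 ≤ ℓ)
    (rh : ℝ) (hrh : 0 < rh)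
    (hroot : 1 - 2 * M / rh - Λ * rh ^ 2 / 3 = 0)
    (huniq : ∀ r : ℝ, 0 < r → 1 - 2 * M / r - Λ * r ^ 2 / 3 = 0 → r = rh) :
    let μ : ℝ := ((ℓ : ℝ) - 1) * ((ℓ : ℝ) + 2)
    let w : ℝ := ((ℓ : ℝ) - 1) * (ℓ : ℝ) * ((ℓ : ℝ) + 1) * ((ℓ : ℝ) + 2) / (12 * M)
    let f : ℝ → ℝ := fun r => 1 - 2 * M / r - Λ * r ^ 2 / 3
    let rstar : ℝ → ℝ := fun r => -∫ s in Set.Ioi r, (f s)⁻¹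
    (∀ r : ℝ, rh < r → IntegrableOn (fun s : ℝ => (f s)⁻¹) (Set.Ioi r)) ∧
    IntegrableOn
      (fun r : ℝ => (r * Real.exp (w * rstar r) / (μ * r + 6 * M)) ^ 2 / f r)
      (Set.Ioi rh) := by
  intro μ w f rstar
  have hl : (2:ℝ) ≤ (ℓ:ℝ) := by exact_mod_cast hℓ
  have hμpos : 0 < μ := by
    show (0:ℝ) < ((ℓ : ℝ) - 1) * ((ℓ : ℝ) + 2)
    nlinarith
  have hw : 0 < w := by
    show (0:ℝ) < ((ℓ : ℝ) - 1) * (ℓ : ℝ) * ((ℓ : ℝ) + 1) * ((ℓ : ℝ) + 2) / (12 * M)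
    have h1 : (0:ℝ) < (ℓ:ℝ) - 1 := by linarith
    have h2 : (0:ℝ) < (ℓ:ℝ) := by linarith
    have h3 : (0:ℝ) < (ℓ:ℝ) + 1 := by linarith
    have h4 : (0:ℝ) < (ℓ:ℝ) + 2 := by linarith
    exact div_pos (mul_pos (mul_pos (mul_pos h1 h2) h3) h4) (by linarith)
  have hGcont := sads_rstar_cont hM hΛ hrh hroot
  -- continuity of the full integrand on Ioi rh
  have hden : ∀ r : ℝ, rh < r → 0 < μ * r + 6 * M := by
    intro r hr
    have h0 : 0 < r := lt_trans hrh hr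
    nlinarith
  have hcont : ContinuousOn
      (fun r : ℝ => (r * Real.exp (w * rstar r) / (μ * r + 6 * M)) ^ 2 / f r)
      (Set.Ioi rh) := by
    apply ContinuousOn.div
    · apply ContinuousOn.pow
      apply ContinuousOn.div
      · exact continuousOn_id.mul
          (Real.continuous_exp.comp_continuousOn (continuousOn_const.mul hGcont.neg))
      · fun_prop
      · exact fun r hr => ne_of_gt (hden r hr)
    · apply ContinuousOn.sub
      · apply ContinuousOn.sub continuousOn_const
        exact continuousOn_const.div continuousOn_id
          (fun s hs => ne_of_gt (lt_trans hrh hs))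
      · fun_prop
    · exact fun r hr => ne_of_gt (sads_pos hM hΛ hrh hroot hr)
  refine ⟨fun r hr => sads_int hM hΛ hrh hroot r hr, ?_⟩
  set K : ℝ := 2 * M / rh ^ 2 - Λ * rh with hKdef
  have hKpos : 0 < K := by
    rw [hKdef]
    have h1 : 0 < 2 * M / rh ^ 2 := by positivity
    have h2 : 0 < -Λ * rh := mul_pos (by linarith) hrh
    linarith
  set k : ℝ := -Λ * (2 * rh) / 3 with hkdef
  have hkpos : 0 < k := by
    rw [hkdef]; have : 0 < -Λ := by linarith
    positivity
  set aa : ℝ := 2 * w / K with haadef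
  have haapos : 0 < aa := by rw [haadef]; exact div_pos (by linarith) hKpos
  set C : ℝ := μ⁻¹ ^ 2 * (rh ^ aa)⁻¹ * k⁻¹ with hCdef
  clear_value K k aa C
  -- bound r/(μ r + 6M) ≤ μ⁻¹
  have hfrac : ∀ r : ℝ, rh < r → r / (μ * r + 6 * M) ≤ μ⁻¹ := by
    intro r hr
    rw [div_le_iff₀ (hden r hr)]
    have he : μ⁻¹ * (μ * r + 6 * M) = r + 6 * M / μ := by
      field_simp
    rw [he]
    have : 0 ≤ 6 * M / μ := by positivity
    linarith
  rw [← Ioc_union_Ioi_eq_Ioi (show rh ≤ 2 * rh by linarith)]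
  apply IntegrableOn.union
  · -- near the horizon
    have hgint : IntegrableOn (fun r : ℝ => C * (r - rh) ^ (aa - 1)) (Ioc rh (2 * rh)) := by
      have h1 : IntervalIntegrable (fun x : ℝ => x ^ (aa - 1)) volume 0 rh :=
        intervalIntegral.intervalIntegrable_rpow' (by linarith)
      have h2 := h1.comp_sub_right rh
      rw [zero_add, show rh + rh = 2 * rh by ring] at h2
      exact ((intervalIntegrable_iff_integrableOn_Ioc_of_le (by linarith)).mp h2).const_mul C
    apply Integrable.mono' hgint
      ((hcont.mono Ioc_subset_Ioi_self).aestronglyMeasurable measurableSet_Ioc)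
    rw [ae_restrict_iff' measurableSet_Ioc]
    apply ae_of_all
    rintro r ⟨hr1, hr2⟩
    have hr0 : 0 < r := lt_trans hrh hr1
    have hrr : 0 < r - rh := sub_pos.mpr hr1
    have hfpos : 0 < f r := sads_pos hM hΛ hrh hroot hr1
    have hflow : k * (r - rh) ≤ f r := by
      rw [hkdef]; exact sads_lower hM hΛ hrh hroot hr1
    set t : ℝ := (r - rh) / rh with htdef
    have ht : 0 < t := by positivity
    -- exponential bound
    have hlb := sads_rstar_bound hM hΛ hrh hroot r hr1 hr2
    rw [← hKdef] at hlb
    have hlog : Real.log (rh / (r - rh)) = -Real.log t := by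
      rw [htdef, ← Real.log_inv, inv_div]
    rw [hlog] at hlb
    have hrstar : rstar r ≤ K⁻¹ * Real.log t := by
      have : rstar r = -∫ s in Set.Ioi r, (f s)⁻¹ := rfl
      rw [this]
      have h2 : K⁻¹ * -Real.log t ≤ ∫ s in Set.Ioi r, (f s)⁻¹ := hlb
      linarith
    have hE : Real.exp (w * rstar r) ≤ t ^ (w / K) := by
      rw [Real.rpow_def_of_pos ht]
      apply Real.exp_le_exp.mpr
      calc w * rstar r ≤ w * (K⁻¹ * Real.log t) :=
            mul_le_mul_of_nonneg_left hrstar hw.le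
        _ = Real.log t * (w / K) := by ring
    have hE0 : 0 ≤ Real.exp (w * rstar r) := (Real.exp_pos _).le
    have hE2 : Real.exp (w * rstar r) ^ 2 ≤ t ^ aa := by
      have h1 : Real.exp (w * rstar r) ^ 2 ≤ (t ^ (w / K)) ^ 2 :=
        pow_le_pow_left₀ hE0 hE 2
      have h2 : (t ^ (w / K)) ^ 2 = t ^ aa := by
        rw [haadef, ← Real.rpow_natCast (t ^ (w / K)) 2, ← Real.rpow_mul ht.le]
        norm_num
        ring_nf
      linarith [h2 ▸ h1]
    -- numerator bound
    have hnum : (r * Real.exp (w * rstar r) / (μ * r + 6 * M)) ^ 2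
        ≤ μ⁻¹ ^ 2 * (Real.exp (w * rstar r)) ^ 2 := by
      have h1 : r * Real.exp (w * rstar r) / (μ * r + 6 * M)
          = (r / (μ * r + 6 * M)) * Real.exp (w * rstar r) := by ring
      have h2 : (r / (μ * r + 6 * M)) * Real.exp (w * rstar r)
          ≤ μ⁻¹ * Real.exp (w * rstar r) :=
        mul_le_mul_of_nonneg_right (hfrac r hr1) hE0
      have h3 : 0 ≤ r * Real.exp (w * rstar r) / (μ * r + 6 * M) := by
        have := hden r hr1; positivity
      calc (r * Real.exp (w * rstar r) / (μ * r + 6 * M)) ^ 2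
          ≤ (μ⁻¹ * Real.exp (w * rstar r)) ^ 2 := by
            apply pow_le_pow_left₀ h3; rw [h1]; exact h2
        _ = μ⁻¹ ^ 2 * (Real.exp (w * rstar r)) ^ 2 := by ring
    have hnum2 : (r * Real.exp (w * rstar r) / (μ * r + 6 * M)) ^ 2
        ≤ μ⁻¹ ^ 2 * t ^ aa := by
      calc (r * Real.exp (w * rstar r) / (μ * r + 6 * M)) ^ 2
          ≤ μ⁻¹ ^ 2 * (Real.exp (w * rstar r)) ^ 2 := hnum
        _ ≤ μ⁻¹ ^ 2 * t ^ aa := by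
            apply mul_le_mul_of_nonneg_left hE2 (by positivity)
    have hmain : (r * Real.exp (w * rstar r) / (μ * r + 6 * M)) ^ 2 / f r
        ≤ μ⁻¹ ^ 2 * t ^ aa / (k * (r - rh)) := by
      apply div_le_div₀ (by positivity) hnum2 (by positivity) hflow
    have heq : μ⁻¹ ^ 2 * t ^ aa / (k * (r - rh)) = C * (r - rh) ^ (aa - 1) := by
      rw [hCdef, htdef, Real.div_rpow hrr.le hrh.le, Real.rpow_sub_one hrr.ne' aa]
      generalize r - rh = d
      ring
    rw [Real.norm_eq_abs, abs_of_nonneg (by positivity)]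
    rw [← heq]
    exact hmain
  · -- far region
    have h2rh : (0:ℝ) < 2 * rh := by linarith
    apply Integrable.mono'
      (((integrableOn_Ioi_rpow_of_lt (by norm_num : (-2:ℝ) < -1) h2rh).const_mul
        (μ⁻¹ ^ 2 * (4 / (-Λ)))))
      ((hcont.mono (Ioi_subset_Ioi (by linarith))).aestronglyMeasurable measurableSet_Ioi)
    rw [ae_restrict_iff' measurableSet_Ioi]
    apply ae_of_all
    intro r hr
    simp only [mem_Ioi] at hr
    have hr1 : rh < r := by linarith
    have hr0 : 0 < r := lt_trans hrh hr1
    have hfpos : 0 < f r := sads_pos hM hΛ hrh hroot hr1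
    have hfar : -Λ / 4 * r ^ 2 ≤ f r := sads_far hM hΛ hrh hroot (le_of_lt hr)
    have hfq : 0 < -Λ / 4 * r ^ 2 := by
      apply mul_pos (by linarith) (by positivity)
    -- exp ≤ 1
    have hG0 : 0 ≤ ∫ s in Set.Ioi r, (f s)⁻¹ := by
      apply setIntegral_nonneg measurableSet_Ioi
      intro s hs
      exact (inv_pos.mpr (sads_pos hM hΛ hrh hroot (lt_trans hr1 hs))).le
    have hE1 : Real.exp (w * rstar r) ≤ 1 := by
      apply Real.exp_le_one_iff.mpr
      have : rstar r = -∫ s in Set.Ioi r, (f s)⁻¹ := rfl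
      rw [this]
      exact mul_nonpos_of_nonneg_of_nonpos hw.le (by linarith)
    have hE0 : 0 ≤ Real.exp (w * rstar r) := (Real.exp_pos _).le
    have hnum : (r * Real.exp (w * rstar r) / (μ * r + 6 * M)) ^ 2 ≤ μ⁻¹ ^ 2 := by
      have h1 : r * Real.exp (w * rstar r) / (μ * r + 6 * M)
          = (r / (μ * r + 6 * M)) * Real.exp (w * rstar r) := by ring
      have h2 : (r / (μ * r + 6 * M)) * Real.exp (w * rstar r) ≤ μ⁻¹ * 1 := by
        apply mul_le_mul (hfrac r hr1) hE1 hE0 (by positivity)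
      have h3 : 0 ≤ r * Real.exp (w * rstar r) / (μ * r + 6 * M) := by
        have := hden r hr1; positivity
      calc (r * Real.exp (w * rstar r) / (μ * r + 6 * M)) ^ 2
          ≤ (μ⁻¹ * 1) ^ 2 := by apply pow_le_pow_left₀ h3; rw [h1]; exact h2
        _ = μ⁻¹ ^ 2 := by ring
    rw [Real.norm_eq_abs, abs_of_nonneg (by positivity)]
    have hrw : r ^ (-2:ℝ) = (r ^ 2)⁻¹ := by
      rw [show (-2:ℝ) = -((2:ℕ):ℝ) by norm_num, Real.rpow_neg hr0.le, Real.rpow_natCast]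
    calc (r * Real.exp (w * rstar r) / (μ * r + 6 * M)) ^ 2 / f r
        ≤ μ⁻¹ ^ 2 / (-Λ / 4 * r ^ 2) := div_le_div₀ (by positivity) hnum hfq hfar
      _ = μ⁻¹ ^ 2 * (4 / (-Λ)) * r ^ (-2:ℝ) := by
          rw [hrw]; field_simp
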